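/- Let m, β_1 be integers with 1 ≤ m < β_1 < 2m, and let φ(t) = Σ_{j≥β_1} a_j t^j be a formal real power series with A_1 := a_{β_1} ≠ 0. Let β_1 < β_2 < ⋯ < β_q be integers and set e_0 = m, e_i = gcd(e_{i−1}, β_i); assume that for each i = 1, …, q one has e_{i−1} ∤ β_i and that every j < β_i with a_j ≠ 0 is divisible by e_{i−1} (so β_1, …, β_q are characteristic exponents of the support of φ relative to m). Let t̃(t) = t + O(t²) be the unique formal power series with t̃(t)^{β_1−m} = φ(t)/(A_1 t^m), and let τ(t̃) be its compositional inverse. Then for every i = 2, …, q, the coefficient of t̃^{β_i − β_1 + m} in the power series τ(t̃)^m equals −m·a_{β_i}/((β_1 − m)·A_1). (The key computation in the proof of Proposition 4.2, case (ii), of the paper: it expresses the characteristic coefficients of the strict transform of a demi-branch under blow-up in terms of the original characteristic coefficients.) -/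

import Mathlib

/-- Composition `F ∘ G` of formal power series (the correct composition whenever the constant
term of `G` vanishes: then `coeff k (G^n) = 0` for `n > k`, so the truncated sum below is the
full substitution). -/
noncomputable def pscomp (F G : PowerSeries ℝ) : PowerSeries ℝ :=
  PowerSeries.mk fun k =>
    ∑ n ∈ Finset.range (k + 1), PowerSeries.coeff n F * PowerSeries.coeff k (G ^ n)

open PowerSeries Finset
private lemma dvd_of_coeff_mul {d j : ℕ} {f g : PowerSeries ℝ}
    (hf : ∀ n < j, coeff n f ≠ 0 → d ∣ n) (hg : ∀ n < j, coeff n g ≠ 0 → d ∣ n) :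
    ∀ n < j, coeff n (f * g) ≠ 0 → d ∣ n := by
  intro n hn h
  rw [PowerSeries.coeff_mul] at h
  obtain ⟨⟨u, v⟩, hmem, hne⟩ := Finset.exists_ne_zero_of_sum_ne_zero h
  rw [HasAntidiagonal.mem_antidiagonal] at hmem
  subst hmem
  exact Nat.dvd_add
    (hf u (lt_of_le_of_lt (Nat.le_add_right u v) hn) (left_ne_zero_of_mul hne))
    (hg v (lt_of_le_of_lt (Nat.le_add_left v u) hn) (right_ne_zero_of_mul hne))

private lemma dvd_of_coeff_pow {d j : ℕ} {f : PowerSeries ℝ}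
    (hf : ∀ n < j, coeff n f ≠ 0 → d ∣ n) (k : ℕ) :
    ∀ n < j, coeff n (f ^ k) ≠ 0 → d ∣ n := by
  induction k with
  | zero =>
    intro n hn h
    rw [pow_zero, PowerSeries.coeff_one] at h
    rcases eq_or_ne n 0 with rfl | h0
    · exact dvd_zero d
    · simp [h0] at h
  | succ k ih =>
    intro n hn h
    rw [pow_succ] at h
    exact dvd_of_coeff_mul ih hf n hn h

private lemma coeff_pow_eq {d j : ℕ} {f : PowerSeries ℝ}
    (hD : ∀ n < j, coeff n f ≠ 0 → d ∣ n)
    (h0 : PowerSeries.constantCoeff f = 1) (hj : ¬ d ∣ j) (p : ℕ) :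
    coeff j (f ^ p) = (p : ℝ) * coeff j f := by
  have hj0 : j ≠ 0 := fun h => hj (h ▸ dvd_zero d)
  have hc0 : coeff 0 f = 1 := by rw [PowerSeries.coeff_zero_eq_constantCoeff, h0]
  induction p with
  | zero => rw [pow_zero, PowerSeries.coeff_one, if_neg hj0]; simp
  | succ p ih =>
    rw [pow_succ, PowerSeries.coeff_mul]
    have hsum : ∀ x ∈ antidiagonal j, coeff x.1 (f ^ p) * coeff x.2 f =
        (if x = ((j, 0) : ℕ × ℕ) then (p : ℝ) * coeff j f else 0) +
        (if x = ((0, j) : ℕ × ℕ) then coeff j f else 0) := by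
      rintro ⟨u, v⟩ hx
      rw [HasAntidiagonal.mem_antidiagonal] at hx
      rcases eq_or_ne u j with rfl | hu
      · have hv : v = 0 := by omega
        subst hv
        rw [if_pos rfl, if_neg (by simp [Prod.ext_iff, hj0]), add_zero, ih, hc0, mul_one]
      · rcases eq_or_ne u 0 with rfl | hu0
        · have hv : v = j := by omega
          subst hv
          rw [if_neg (by simp [Prod.ext_iff]; omega), if_pos rfl, zero_add]
          have hp0 : coeff 0 (f ^ p) = 1 := by
            rw [PowerSeries.coeff_zero_eq_constantCoeff, map_pow, h0, one_pow]
          rw [hp0, one_mul]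
       -- middle case
        · rw [if_neg (by simp [Prod.ext_iff, hu]), if_neg (by simp [Prod.ext_iff, hu0]), add_zero]
          by_contra hne
          have hdu : d ∣ u :=
            dvd_of_coeff_pow hD p u (by omega) (left_ne_zero_of_mul hne)
          have hdv : d ∣ v := hD v (by omega) (right_ne_zero_of_mul hne)
          exact hne (absurd (hx ▸ Nat.dvd_add hdu hdv) hj)
    rw [Finset.sum_congr rfl hsum, Finset.sum_add_distrib,
        Finset.sum_ite_eq' (antidiagonal j) ((j, 0) : ℕ × ℕ) (fun _ => (p : ℝ) * coeff j f),
        Finset.sum_ite_eq' (antidiagonal j) ((0, j) : ℕ × ℕ) (fun _ => coeff j f),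
        if_pos (by rw [HasAntidiagonal.mem_antidiagonal]; omega), if_pos (by rw [HasAntidiagonal.mem_antidiagonal]; omega)]
    push_cast
    ring

private lemma sum_eq_two {s : Finset ℕ} (t : ℕ → ℝ) {b c : ℕ} (hb : b ∈ s) (hc : c ∈ s)
    (hbc : b ≠ c) (h : ∀ x ∈ s, x ≠ b → x ≠ c → t x = 0) :
    ∑ x ∈ s, t x = t b + t c := by
  rw [← Finset.sum_subset (s₁ := ({b, c} : Finset ℕ)) ?hsub ?hz, Finset.sum_pair hbc]
  case hsub =>
    intro x hx
    rcases Finset.mem_insert.mp hx with rfl | hx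
    · exact hb
    · rw [Finset.mem_singleton] at hx; exact hx ▸ hc
  case hz =>
    intro x hx hnx
    exact h x hx (fun h' => hnx (by simp [h'])) (fun h' => hnx (by simp [h']))

private lemma eq_X_mul_shift {f : PowerSeries ℝ} (h : coeff 0 f = 0) :
    f = X * PowerSeries.mk fun n => coeff (n + 1) f := by
  ext n
  cases n with
  | zero => rw [PowerSeries.coeff_zero_X_mul, h]
  | succ n => rw [PowerSeries.coeff_succ_X_mul, PowerSeries.coeff_mk]


/-- **Key computation in the proof of Proposition 4.2, case (ii).**  Let `1 ≤ m < β₁ < 2m`, let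
`φ(t) = Σ_{j≥β₁} a_j t^j` be a formal real power series with `A₁ = a (β 1) ≠ 0` (`β 1 = β₁`),
and let `β 1 < β 2 < ⋯ < β q` with `e 0 = m`, `e i = gcd (e (i−1)) (β i)`, `e (i−1) ∤ β i`, and
every exponent of the support of `φ` below `β i` divisible by `e (i−1)` — so the `β i` are
characteristic exponents of the support of `φ` relative to `m`.  Let `t̃(t) = t + O(t²)` be the
unique formal power series with `t̃(t)^{β₁−m} = φ(t)/(A₁ t^m)`, i.e. with coefficients
`n ↦ a (n+m)/A₁`, and let `τ` be its compositional inverse.  Then for `2 ≤ i ≤ q`, the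
coefficient of `t̃^{β i − β 1 + m}` in `τ(t̃)^m` equals `−m·a (β i)/((β₁−m)·A₁)`. -/
theorem prop42_case_ii_key_computation
    (m : ℕ) (hm : 1 ≤ m) (q : ℕ) (β e : ℕ → ℕ) (a : ℕ → ℝ)
    (hβ₁ : m < β 1) (hβ₁' : β 1 < 2 * m)
    (hmono : ∀ i, 1 ≤ i → i < q → β i < β (i + 1))
    (he0 : e 0 = m)
    (he : ∀ i, 1 ≤ i → i ≤ q → e i = Nat.gcd (e (i - 1)) (β i))
    (hnd : ∀ i, 1 ≤ i → i ≤ q → ¬ e (i - 1) ∣ β i)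
    (hdiv : ∀ i, 1 ≤ i → i ≤ q → ∀ j < β i, a j ≠ 0 → e (i - 1) ∣ j)
    (hlow : ∀ j < β 1, a j = 0)
    (hA₁ : a (β 1) ≠ 0)
    (T τ : PowerSeries ℝ)
    (hT0 : PowerSeries.coeff 0 T = 0) (hT1 : PowerSeries.coeff 1 T = 1)
    (hTpow : T ^ (β 1 - m) = PowerSeries.mk (fun n => a (n + m) / a (β 1)))
    (hτ0 : PowerSeries.coeff 0 τ = 0)
    (hinv₁ : pscomp τ T = PowerSeries.X) (hinv₂ : pscomp T τ = PowerSeries.X) :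
    ∀ i, 2 ≤ i → i ≤ q →
      PowerSeries.coeff (β i - β 1 + m) (τ ^ m) =
        - (m : ℝ) * a (β i) / (((β 1 : ℝ) - (m : ℝ)) * a (β 1)) := by
  intro i hi2 hiq
  -- arithmetic setup -----------------------------------------------------
  have hchain : ∀ k, 1 ≤ k → k ≤ q → e k ∣ e 1 := by
    intro k
    induction k with
    | zero => omega
    | succ k ih =>
      intro h1 hkq
      rcases Nat.lt_or_ge k 1 with hk | hk
      · have : k = 0 := by omega
        subst this; exact dvd_rfl
      · have hek : e (k + 1) = Nat.gcd (e k) (β (k + 1)) := by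
          have := he (k + 1) (by omega) hkq
          simpa using this
        exact (hek ▸ Nat.gcd_dvd_left _ _).trans (ih hk (by omega))
  set d := e (i - 1) with hd
  have hde1 : d ∣ e 1 := hchain (i - 1) (by omega) (by omega)
  have he1 : e 1 = Nat.gcd m (β 1) := by
    have := he 1 le_rfl (by omega)
    simpa [he0] using this
  have hdm : d ∣ m := hde1.trans (he1 ▸ Nat.gcd_dvd_left _ _)
  have hdβ1 : d ∣ β 1 := hde1.trans (he1 ▸ Nat.gcd_dvd_right _ _)
  have hndβi : ¬ d ∣ β i := hnd i (by omega) hiq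
  have hβlt : β 1 < β i := by
    have key : ∀ k, 2 ≤ k → k ≤ q → β 1 < β k := by
      intro k
      induction k with
      | zero => omega
      | succ k ih =>
        intro h2 hkq
        rcases Nat.lt_or_ge k 2 with hk | hk
        · have : k = 1 := by omega
          subst this
          exact hmono 1 le_rfl (by omega)
        · exact lt_trans (ih hk (by omega)) (hmono k (by omega) (by omega))
    exact key i hi2 hiq
  set p := β 1 - m with hp
  set K0 := β i - β 1 with hK0
  have hp1 : 1 ≤ p := by omega
  have hK01 : 1 ≤ K0 := by omega
  have hdp : d ∣ p := by
    have := Nat.dvd_sub hdβ1 hdm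
    simpa [hp] using this
  have hdK0 : ¬ d ∣ K0 := by
    intro h
    apply hndβi
    have hsum : β i = K0 + β 1 := by omega
    rw [hsum]
    exact Nat.dvd_add h hdβ1
  have hp0 : (p : ℝ) ≠ 0 := by
    simp only [ne_eq, Nat.cast_eq_zero]; omega
  -- the shifted series T' and σ ------------------------------------------
  set T' : PowerSeries ℝ := PowerSeries.mk (fun n => coeff (n + 1) T) with hT'def
  set σ : PowerSeries ℝ := PowerSeries.mk (fun n => coeff (n + 1) τ) with hσdef
  have hT'c : ∀ u, coeff u T' = coeff (u + 1) T := by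
    intro u; rw [hT'def, PowerSeries.coeff_mk]
  have hσc : ∀ u, coeff u σ = coeff (u + 1) τ := by
    intro u; rw [hσdef, PowerSeries.coeff_mk]
  have hTX : T = X * T' := eq_X_mul_shift hT0
  have hτX : τ = X * σ := eq_X_mul_shift hτ0
  have constT' : PowerSeries.constantCoeff T' = 1 := by
    rw [← PowerSeries.coeff_zero_eq_constantCoeff, hT'c, hT1]
  have hτ1 : coeff 1 τ = 1 := by
    have h := congrArg (coeff 1) hinv₂
    simp only [pscomp, PowerSeries.coeff_mk, PowerSeries.coeff_X, if_pos rfl] at h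
    rw [Finset.sum_range_succ, Finset.sum_range_one] at h
    simpa [hT0, hT1] using h
  have constσ : PowerSeries.constantCoeff σ = 1 := by
    rw [← PowerSeries.coeff_zero_eq_constantCoeff, hσc, hτ1]
  have hτpow : ∀ k j, coeff (j + k) (τ ^ k) = coeff j (σ ^ k) := by
    intro k j
    rw [hτX, mul_pow, PowerSeries.coeff_X_pow_mul]
  -- coefficients of T'^p -------------------------------------------------
  have hcoeffTpow : ∀ j, coeff j (T' ^ p) = a (β 1 + j) / a (β 1) := by
    intro j
    have h1 : coeff (j + p) (T ^ p) = a (β 1 + j) / a (β 1) := by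
      rw [hp, hTpow, PowerSeries.coeff_mk]
      congr 2
      omega
    rwa [hTX, mul_pow, PowerSeries.coeff_X_pow_mul] at h1
  -- Claim A : support of T' below K0 --------------------------------------
  have ClaimA : ∀ j, j < K0 → ¬ d ∣ j → coeff j T' = 0 := by
    intro j
    induction j using Nat.strong_induction_on with
    | _ j ih =>
    intro hjK hdj
    have hD : ∀ n < j, coeff n T' ≠ 0 → d ∣ n := by
      intro n hn hne
      by_contra hdn
      exact hne (ih n hn (lt_trans hn hjK) hdn)
    have hE := coeff_pow_eq hD constT' hdj p
    rw [hcoeffTpow j] at hE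
    have ha : a (β 1 + j) = 0 := by
      by_contra hne
      have hlt : β 1 + j < β i := by omega
      have hdvd : d ∣ β 1 + j := hdiv i (by omega) hiq (β 1 + j) hlt hne
      have : d ∣ j := by
        have h2 := Nat.dvd_sub hdvd hdβ1
        simpa using h2
      exact hdj this
    rw [ha, zero_div] at hE
    rcases mul_eq_zero.mp hE.symm with h | h
    · exact absurd h hp0
    · exact h
  have hDT' : ∀ n < K0, coeff n T' ≠ 0 → d ∣ n := by
    intro n hn hne
    by_contra hdn
    exact hne (ClaimA n hn hdn)
  -- Claim A' : the key coefficient of T' ----------------------------------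
  have ClaimA' : (p : ℝ) * coeff K0 T' = a (β i) / a (β 1) := by
    have hE := coeff_pow_eq hDT' constT' hdK0 p
    rw [hcoeffTpow K0] at hE
    have hβi : β 1 + K0 = β i := by omega
    rw [hβi] at hE
    exact hE.symm
  -- Claim B : support of τ below K0+1 --------------------------------------
  have ClaimB : ∀ n, 2 ≤ n → n ≤ K0 → ¬ d ∣ (n - 1) → coeff n τ = 0 := by
    intro n
    induction n using Nat.strong_induction_on with
    | _ n ih =>
    intro h2 hnK hdn
    have hσD : ∀ u < n - 1, coeff u σ ≠ 0 → d ∣ u := by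
      intro u hu hne
      rcases Nat.eq_zero_or_pos u with rfl | hu1
      · exact dvd_zero d
      · by_contra hdu
        apply hne
        rw [hσc]
        exact ih (u + 1) (by omega) (by omega) (by omega) (by simpa using hdu)
    have h := congrArg (coeff n) hinv₂
    simp only [pscomp, PowerSeries.coeff_mk, PowerSeries.coeff_X] at h
    rw [if_neg (by omega)] at h
    have hone : (1 : ℕ) ∈ Finset.range (n + 1) := by rw [Finset.mem_range]; omega
    have hz : ∀ k ∈ Finset.range (n + 1), k ≠ 1 →
        coeff k T * coeff n (τ ^ k) = 0 := by
      intro k hk hk1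
      rw [Finset.mem_range] at hk
      rcases Nat.eq_zero_or_pos k with rfl | hk0
      · rw [hT0, zero_mul]
      · have hk2 : 2 ≤ k := by omega
        by_contra hne
        have hdk : d ∣ (k - 1) := by
          have hc : coeff (k - 1) T' ≠ 0 := by
            rw [hT'c]
            have : k - 1 + 1 = k := by omega
            rw [this]
            exact left_ne_zero_of_mul hne
          exact hDT' (k - 1) (by omega) hc
        have hdnk : d ∣ (n - k) := by
          have hc : coeff (n - k) (σ ^ k) ≠ 0 := by
            have h3 : coeff n (τ ^ k) ≠ 0 := right_ne_zero_of_mul hne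
            have h4 : n = (n - k) + k := by omega
            rw [h4, hτpow] at h3
            exact h3
          exact dvd_of_coeff_pow hσD k (n - k) (by omega) hc
        apply hdn
        have : n - 1 = (k - 1) + (n - k) := by omega
        rw [this]
        exact Nat.dvd_add hdk hdnk
    rw [Finset.sum_eq_single_of_mem 1 hone hz, hT1, one_mul, pow_one] at h
    exact h
  have hDσ : ∀ u < K0, coeff u σ ≠ 0 → d ∣ u := by
    intro u hu hne
    rcases Nat.eq_zero_or_pos u with rfl | hu1
    · exact dvd_zero d
    · by_contra hdu
      apply hne
      rw [hσc]
      exact ClaimB (u + 1) (by omega) (by omega) (by simpa using hdu)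
  -- Claim B' : the key coefficient of τ ------------------------------------
  have ClaimB' : coeff (K0 + 1) τ = - coeff K0 T' := by
    have h := congrArg (coeff (K0 + 1)) hinv₂
    simp only [pscomp, PowerSeries.coeff_mk, PowerSeries.coeff_X] at h
    rw [if_neg (by omega)] at h
    have h1mem : (1 : ℕ) ∈ Finset.range (K0 + 1 + 1) := by rw [Finset.mem_range]; omega
    have hKmem : (K0 + 1) ∈ Finset.range (K0 + 1 + 1) := by rw [Finset.mem_range]; omega
    have hz : ∀ k ∈ Finset.range (K0 + 1 + 1), k ≠ 1 → k ≠ K0 + 1 →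
        (fun k => coeff k T * coeff (K0 + 1) (τ ^ k)) k = 0 := by
      intro k hk hk1 hkK
      simp only
      rw [Finset.mem_range] at hk
      rcases Nat.eq_zero_or_pos k with rfl | hk0
      · rw [hT0, zero_mul]
      · have hk2 : 2 ≤ k := by omega
        have hkK0 : k ≤ K0 := by omega
        by_contra hne
        have hdk : d ∣ (k - 1) := by
          have hc : coeff (k - 1) T' ≠ 0 := by
            rw [hT'c]
            have : k - 1 + 1 = k := by omega
            rw [this]
            exact left_ne_zero_of_mul hne
          exact hDT' (k - 1) (by omega) hc
        have hdnk : d ∣ (K0 + 1 - k) := by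
          have hc : coeff (K0 + 1 - k) (σ ^ k) ≠ 0 := by
            have h3 : coeff (K0 + 1) (τ ^ k) ≠ 0 := right_ne_zero_of_mul hne
            have h4 : K0 + 1 = (K0 + 1 - k) + k := by omega
            rw [h4, hτpow] at h3
            exact h3
          exact dvd_of_coeff_pow hDσ k (K0 + 1 - k) (by omega) hc
        apply hdK0
        have : K0 = (k - 1) + (K0 + 1 - k) := by omega
        rw [this]
        exact Nat.dvd_add hdk hdnk
    rw [sum_eq_two (fun k => coeff k T * coeff (K0 + 1) (τ ^ k)) h1mem hKmem
      (by omega) hz] at h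
    simp only [hT1, one_mul, pow_one] at h
    have hσ0 : coeff (K0 + 1) (τ ^ (K0 + 1)) = 1 := by
      have h5 := hτpow (K0 + 1) 0
      rw [zero_add] at h5
      rw [h5, PowerSeries.coeff_zero_eq_constantCoeff, map_pow, constσ, one_pow]
    rw [hσ0, mul_one] at h
    have hTK : coeff (K0 + 1) T = coeff K0 T' := (hT'c K0).symm
    rw [hTK] at h
    linarith
  -- Final computation -------------------------------------------------------
  have hfin : coeff (β i - β 1 + m) (τ ^ m) = (m : ℝ) * coeff K0 σ := by
    have hidx : β i - β 1 + m = K0 + m := by omega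
    rw [hidx, hτpow m K0]
    exact coeff_pow_eq hDσ constσ hdK0 m
  rw [hfin, hσc K0, ClaimB']
  have hcast : ((β 1 : ℝ) - (m : ℝ)) = (p : ℝ) := by
    rw [hp]
    push_cast [Nat.cast_sub (le_of_lt hβ₁)]
    ring
  rw [hcast]
  have hx : coeff K0 T' = a (β i) / ((p : ℝ) * a (β 1)) := by
    rw [eq_div_iff (mul_ne_zero hp0 hA₁)]
    calc coeff K0 T' * ((p : ℝ) * a (β 1))
        = ((p : ℝ) * coeff K0 T') * a (β 1) := by ring
      _ = (a (β i) / a (β 1)) * a (β 1) := by rw [ClaimA']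
      _ = a (β i) := div_mul_cancel₀ _ hA₁
  rw [hx]
  ring
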